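/- Let G and Q be groups with Q commutative, let f : ℤ → G and g : G → Q be group homomorphisms such that g is surjective and the kernel of g is contained in the range of f (i.e. the sequence ℤ → G → Q → 1 is exact). If the abelianization of G is trivial, then G is the trivial group. -/

import Mathlib

/-- If `ℤ → G → Q → 1` is exact with `Q` commutative and the abelianization of `G`
is trivial, then `G` is trivial. -/
theorem seifert_pi1_trivial {G Q : Type*} [Group G] [CommGroup Q]
    (f : Multiplicative ℤ →* G) (g : G →* Q)
    (hsurj : Function.Surjective g)
    (hexact : g.ker ≤ f.range)
    (hab : ∀ x : Abelianization G, x = 1) :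
    ∀ x : G, x = 1 := by
  -- every element is killed by g, since g factors through the trivial abelianization
  have hg : ∀ x : G, g x = 1 := by
    intro x
    have := Abelianization.lift_apply_of g x
    rw [hab (Abelianization.of x), map_one] at this
    exact this.symm
  -- hence every element lies in the range of f
  have hr : ∀ x : G, x ∈ f.range := fun x => hexact (hg x)
  -- so G is commutative
  have hcomm : ∀ a b : G, Commute a b := by
    intro a b
    obtain ⟨x, hx⟩ := hr a
    obtain ⟨y, hy⟩ := hr b
    rw [← hx, ← hy, Commute, SemiconjBy, ← map_mul, ← map_mul, mul_comm]
  -- hence the commutator subgroup is trivial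
  have hbot : commutator G = ⊥ := by
    rw [eq_bot_iff, commutator_def, Subgroup.commutator_def, Subgroup.closure_le]
    rintro z ⟨a, -, b, -, rfl⟩
    exact (commutatorElement_eq_one_iff_commute.mpr (hcomm a b))
  intro x
  have hx : x ∈ commutator G :=
    (QuotientGroup.eq_one_iff x).mp (hab (Abelianization.of x))
  rw [hbot] at hx
  exact hx
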